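/- arXiv:1912.07196 — 5 statements merged into one kernel-verified Lean document; each statement's English description precedes it below -/
import Mathlib

section
/- Let n ≥ 2, let u_1 < u_2 < ... < u_{n−1} be reals, and let c ≥ u_{n−1}. For t > c and an n×n matrix Φ, let M(t,Φ) be the n×n matrix with entries M(t,Φ)_{ij} = (δ_{in} − δ_{jn})·Φ_{ij}/(û_i − û_j) for i ≠ j and 0 for i = j, where û_i = u_i for i < n and û_n = t. Suppose Φ : (c,∞) → Mat_n(ℂ) is differentiable, Φ(t) is Hermitian for all t, and Φ′(t) = (2πi)⁻¹·(Φ(t)·M(t,Φ(t)) − M(t,Φ(t))·Φ(t)). Then there exist a Hermitian matrix H, a constant C > 0 and t₀ > c such that ‖δ_{n−1}(Φ(t)) − H‖ ≤ C/t for all t ≥ t₀. -/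
open Matrix

open scoped Matrix.Norms.L2Operator

noncomputable section

/-- `û(t) = (u_1, ..., u_{n-1}, t)`. -/
def uhat (m : ℕ) (u : Fin m → ℝ) (t : ℝ) (i : Fin (m + 1)) : ℝ :=
  Fin.lastCases t u i

/-- The matrix `M(t,Φ)` with entries `(δ_{in} − δ_{jn})·Φ_{ij}/(û_i − û_j)` off the
diagonal and `0` on the diagonal. -/
def Mmat (m : ℕ) (u : Fin m → ℝ) (t : ℝ) (P : Matrix (Fin (m + 1)) (Fin (m + 1)) ℂ) :
    Matrix (Fin (m + 1)) (Fin (m + 1)) ℂ :=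
  Matrix.of fun i j =>
    if i = j then 0
    else (((if i = Fin.last m then 1 else 0) : ℂ) - (if j = Fin.last m then 1 else 0)) *
      P i j / ((uhat m u t i : ℂ) - (uhat m u t j : ℂ))

/-- `δ_k(A)`: keeps the upper-left `k × k` block and the diagonal, zero elsewhere
(indices `0`-based, so "`i ≤ k`" in `1`-based notation is `(i : ℕ) < k`). -/
def deltaTrunc (m : ℕ) (k : ℕ) (A : Matrix (Fin (m + 1)) (Fin (m + 1)) ℂ) :
    Matrix (Fin (m + 1)) (Fin (m + 1)) ℂ :=
  Matrix.of fun i j => if ((i : ℕ) < k ∧ (j : ℕ) < k) ∨ i = j then A i j else 0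

variable {m : ℕ} {u : Fin m → ℝ} {t : ℝ} {P : Matrix (Fin (m + 1)) (Fin (m + 1)) ℂ}

lemma uhat_last : uhat m u t (Fin.last m) = t := by
  simp [uhat]

lemma ne_last_iff {i : Fin (m+1)} : i ≠ Fin.last m ↔ (i:ℕ) < m := by
  simp only [ne_eq, Fin.ext_iff, Fin.val_last]
  omega

lemma uhat_ne {i : Fin (m+1)} (h : (i:ℕ) < m) : uhat m u t i = u ⟨i, h⟩ := by
  obtain ⟨j, rfl⟩ := Fin.exists_castSucc_eq.mpr (ne_last_iff.mpr h)
  rw [uhat, Fin.lastCases_castSucc]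
  congr 1

lemma Mmat_apply_ne {i j : Fin (m+1)} (hij : i ≠ j) (hi : i ≠ Fin.last m) (hj : j ≠ Fin.last m) :
    Mmat m u t P i j = 0 := by
  simp [Mmat, hij, hi, hj]

lemma Mmat_apply_last_right {i : Fin (m+1)} (hi : i ≠ Fin.last m) :
    Mmat m u t P i (Fin.last m) = - P i (Fin.last m) / ((uhat m u t i : ℂ) - (t:ℂ)) := by
  simp [Mmat, hi, uhat_last]

lemma Mmat_apply_last_left {j : Fin (m+1)} (hj : j ≠ Fin.last m) :
    Mmat m u t P (Fin.last m) j = P (Fin.last m) j / ((t:ℂ) - (uhat m u t j : ℂ)) := by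
  simp [Mmat, hj, (Ne.symm hj), uhat_last]

lemma mul_Mmat_apply {i j : Fin (m+1)} (hj : j ≠ Fin.last m) :
    (P * Mmat m u t P) i j = P i (Fin.last m) * (P (Fin.last m) j / ((t:ℂ) - (uhat m u t j : ℂ))) := by
  rw [Matrix.mul_apply, Finset.sum_eq_single (Fin.last m)]
  · rw [Mmat_apply_last_left hj]
  · intro k _ hk
    by_cases hkj : k = j
    · subst hkj; simp [Mmat]
    · rw [Mmat_apply_ne hkj hk hj, mul_zero]
  · simp

lemma Mmat_mul_apply {i j : Fin (m+1)} (hi : i ≠ Fin.last m) :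
    (Mmat m u t P * P) i j = (- P i (Fin.last m) / ((uhat m u t i : ℂ) - (t:ℂ))) * P (Fin.last m) j := by
  rw [Matrix.mul_apply, Finset.sum_eq_single (Fin.last m)]
  · rw [Mmat_apply_last_right hi]
  · intro k _ hk
    by_cases hik : i = k
    · subst hik; simp [Mmat]
    · rw [Mmat_apply_ne hik hi hk, zero_mul]
  · simp

lemma comm_last_last :
    (P * Mmat m u t P - Mmat m u t P * P) (Fin.last m) (Fin.last m) = 0 := by
  rw [Matrix.sub_apply, Matrix.mul_apply, Matrix.mul_apply, sub_eq_zero]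
  apply Finset.sum_congr rfl
  intro k _
  by_cases hk : k = Fin.last m
  · subst hk; simp [Mmat]
  · rw [Mmat_apply_last_right hk, Mmat_apply_last_left hk]
    rw [div_eq_mul_inv, div_eq_mul_inv, ← neg_sub ((t:ℂ)), inv_neg]
    ring

lemma comm_diag {i : Fin (m+1)} :
    (P * Mmat m u t P - Mmat m u t P * P) i i = 0 := by
  by_cases hi : i = Fin.last m
  · subst hi; exact comm_last_last
  · rw [Matrix.sub_apply, mul_Mmat_apply hi, Mmat_mul_apply hi, sub_eq_zero]
    rw [div_eq_mul_inv, div_eq_mul_inv, ← neg_sub ((t:ℂ)) (((uhat m u t i : ℝ)):ℂ), inv_neg]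
    ring

lemma key_formula :
    deltaTrunc m m (P * Mmat m u t P - Mmat m u t P * P) =
    Matrix.of fun (i j : Fin (m+1)) => if h : (i:ℕ) < m ∧ (j:ℕ) < m then
      P i (Fin.last m) * P (Fin.last m) j *
        (1/((t:ℂ) - (u ⟨j, h.2⟩ : ℝ)) - 1/((t:ℂ) - (u ⟨i, h.1⟩ : ℝ)))
    else 0 := by
  ext i j
  rw [deltaTrunc, Matrix.of_apply, Matrix.of_apply]
  by_cases hij : i = j
  · subst hij
    rw [if_pos (Or.inr rfl), comm_diag]
    split
    · next h => simp
    · rfl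
  · by_cases h : (i:ℕ) < m ∧ (j:ℕ) < m
    · rw [if_pos (Or.inl h), dif_pos h]
      have hi := ne_last_iff.mpr h.1
      have hj := ne_last_iff.mpr h.2
      rw [Matrix.sub_apply, mul_Mmat_apply hj, Mmat_mul_apply hi,
        uhat_ne (u := u) h.1, uhat_ne (u := u) h.2]
      rw [div_eq_mul_inv, div_eq_mul_inv, ← neg_sub ((t:ℂ)) ((u ⟨i, h.1⟩ : ℝ) : ℂ), inv_neg]
      ring
    · rw [if_neg, dif_neg h]
      rintro (h' | h')
      · exact h h'
      · exact hij h'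

lemma deltaTrunc_add (k : ℕ) (A B : Matrix (Fin (m+1)) (Fin (m+1)) ℂ) :
    deltaTrunc m k (A + B) = deltaTrunc m k A + deltaTrunc m k B := by
  ext i j
  simp only [deltaTrunc, Matrix.of_apply, Matrix.add_apply]
  split <;> simp

lemma deltaTrunc_smul {R : Type*} [Semiring R] [Module R ℂ] (k : ℕ) (s : R)
    (A : Matrix (Fin (m+1)) (Fin (m+1)) ℂ) :
    deltaTrunc m k (s • A) = s • deltaTrunc m k A := by
  ext i j
  simp only [deltaTrunc, Matrix.of_apply, Matrix.smul_apply]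
  split <;> simp

lemma deltaTrunc_conjTranspose (k : ℕ) (A : Matrix (Fin (m+1)) (Fin (m+1)) ℂ) :
    (deltaTrunc m k A)ᴴ = deltaTrunc m k Aᴴ := by
  ext i j
  simp only [deltaTrunc, Matrix.conjTranspose_apply, Matrix.of_apply]
  have : ((j:ℕ) < k ∧ (i:ℕ) < k) ∨ j = i ↔ ((i:ℕ) < k ∧ (j:ℕ) < k) ∨ i = j := by
    constructor <;> (rintro (⟨h1,h2⟩|h) ; exacts [Or.inl ⟨h2,h1⟩, Or.inr h.symm])
  rw [apply_ite star, star_zero, if_congr this rfl rfl]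

/-- `deltaTrunc m m` as a real-linear continuous map. -/
def deltaCLM (m : ℕ) : Matrix (Fin (m+1)) (Fin (m+1)) ℂ →L[ℝ] Matrix (Fin (m+1)) (Fin (m+1)) ℂ :=
  LinearMap.toContinuousLinearMap
    { toFun := deltaTrunc m m
      map_add' := deltaTrunc_add m
      map_smul' := fun s A => deltaTrunc_smul m s A }

lemma trace_comm_zero (N : ℕ) (A M : Matrix (Fin N) (Fin N) ℂ) (s : ℂ) :
    Matrix.trace ((s • (A * M - M * A)) * A + A * (s • (A * M - M * A))) = 0 := by
  simp only [Matrix.smul_mul, Matrix.mul_smul, Matrix.sub_mul, Matrix.mul_sub,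
    Matrix.trace_add, Matrix.trace_smul, Matrix.trace_sub]
  rw [Matrix.mul_assoc A M A]
  have h : (A * (M * A)).trace = (A * (A * M)).trace := by
    rw [← Matrix.mul_assoc, Matrix.trace_mul_comm]
  rw [h, ← Matrix.mul_assoc A A M, Matrix.trace_mul_comm (A*A) M, ← Matrix.mul_assoc M A A]
  simp

lemma herm_entry_sq_le {N : ℕ} (A : Matrix (Fin N) (Fin N) ℂ) (hA : A.IsHermitian)
    (i j : Fin N) : ‖A i j‖ ^ 2 ≤ (Matrix.trace (A * A)).re := by
  have key : Matrix.trace (A * A) = ((∑ p, ∑ q, Complex.normSq (A p q) : ℝ) : ℂ) := by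
    rw [Matrix.trace]
    push_cast
    apply Finset.sum_congr rfl
    intro p _
    rw [Matrix.diag, Matrix.mul_apply]
    apply Finset.sum_congr rfl
    intro q _
    have hq : A q p = (starRingEnd ℂ) (A p q) := by
      conv_lhs => rw [← hA]
      rfl
    rw [hq, Complex.mul_conj]
  rw [key, Complex.ofReal_re]
  have h1 : ‖A i j‖ ^ 2 = Complex.normSq (A i j) := by
    rw [Complex.normSq_eq_norm_sq]
  rw [h1]
  have h2 : Complex.normSq (A i j) ≤ ∑ q, Complex.normSq (A i q) :=
    Finset.single_le_sum (f := fun q => Complex.normSq (A i q))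
      (fun q _ => Complex.normSq_nonneg _) (Finset.mem_univ j)
  refine h2.trans ?_
  exact Finset.single_le_sum (f := fun p => ∑ q, Complex.normSq (A p q))
    (fun p _ => Finset.sum_nonneg fun q _ => Complex.normSq_nonneg _) (Finset.mem_univ i)

lemma inv_diff_abs_le {t a b C : ℝ} (ha : a ≤ C) (hb : b ≤ C) (ht : C < t) :
    |1/(t-a) - 1/(t-b)| ≤ |a-b| / (t-C)^2 := by
  have hta : 0 < t - a := by linarith
  have htb : 0 < t - b := by linarith
  have htC : 0 < t - C := by linarith
  have key : 1/(t-a) - 1/(t-b) = (a - b) / ((t-a)*(t-b)) := by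
    field_simp
    ring
  rw [key, abs_div, abs_of_pos (by positivity : (0:ℝ) < (t-a)*(t-b))]
  gcongr
  nlinarith


set_option maxHeartbeats 1000000 in
lemma std_norm_le {N : ℕ} (i j : Fin N) (a : ℂ) : ‖Matrix.single i j a‖ ≤ ‖a‖ := by
  rw [Matrix.l2_opNorm_def]
  refine ContinuousLinearMap.opNorm_le_bound _ (norm_nonneg a) fun x => ?_
  have h1 : ((toEuclideanLin ≪≫ₗ LinearMap.toContinuousLinearMap) (single i j a)) x
      = (WithLp.equiv 2 (Fin N → ℂ)).symm ((single i j a) *ᵥ (WithLp.equiv 2 (Fin N → ℂ)) x) := rfl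
  rw [h1, EuclideanSpace.norm_eq]
  set y : Fin N → ℂ := (WithLp.equiv 2 (Fin N → ℂ)) x with hy
  have hmv : ∀ k, ((single i j a) *ᵥ y) k = if k = i then a * y j else 0 := by
    intro k
    simp only [Matrix.mulVec, Matrix.single, dotProduct, Matrix.of_apply, ite_and]
    by_cases hk : i = k <;> simp [hk, eq_comm, Finset.sum_ite_eq]
  have hsum : ∑ k, ‖((WithLp.equiv 2 (Fin N → ℂ)).symm ((single i j a) *ᵥ y)) k‖ ^ 2
      = ‖a * y j‖ ^ 2 := by
    have : ∀ k, ((WithLp.equiv 2 (Fin N → ℂ)).symm ((single i j a) *ᵥ y)) k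
        = ((single i j a) *ᵥ y) k := fun k => rfl
    simp only [this, hmv]
    rw [Finset.sum_eq_single i] <;> simp +contextual
  rw [hsum]
  have hyj : ‖y j‖ ≤ ‖x‖ := by
    rw [EuclideanSpace.norm_eq]
    have h2 : ‖y j‖ = Real.sqrt (‖y j‖^2) := by
      rw [Real.sqrt_sq (norm_nonneg _)]
    rw [h2]
    apply Real.sqrt_le_sqrt
    exact Finset.single_le_sum (f := fun k => ‖y k‖^2) (fun k _ => by positivity) (Finset.mem_univ j)
  rw [Real.sqrt_sq (norm_nonneg _), norm_mul]
  exact mul_le_mul_of_nonneg_left hyj (norm_nonneg a)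

lemma norm_le_sum_entries {N : ℕ} (A : Matrix (Fin N) (Fin N) ℂ) :
    ‖A‖ ≤ ∑ i, ∑ j, ‖A i j‖ := by
  conv_lhs => rw [Matrix.matrix_eq_sum_single A]
  refine (norm_sum_le _ _).trans (Finset.sum_le_sum fun i _ => ?_)
  exact (norm_sum_le _ _).trans (Finset.sum_le_sum fun j _ => std_norm_le i j (A i j))

section Main
variable {m : ℕ}

/-- trace as a real-continuous-linear map -/
def traceCLM (m : ℕ) : Matrix (Fin (m+1)) (Fin (m+1)) ℂ →L[ℝ] ℂ :=
  LinearMap.toContinuousLinearMap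
    ((Matrix.traceLinearMap (Fin (m+1)) ℂ ℂ).restrictScalars ℝ)

set_option maxHeartbeats 4000000 in
/-- For a Hermitian solution of the isomonodromy ODE in the single variable `t = u_n`,
the truncation `δ_{n−1}(Φ(t))` converges to a Hermitian matrix `H` with rate `O(1/t)`. -/
theorem stmt4 (m : ℕ) (hm : 1 ≤ m) (u : Fin m → ℝ) (hu : StrictMono u)
    (c : ℝ) (hc : ∀ i, u i ≤ c)
    (Φ : ℝ → Matrix (Fin (m + 1)) (Fin (m + 1)) ℂ)
    (hherm : ∀ t ∈ Set.Ioi c, (Φ t).IsHermitian)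
    (hode : ∀ t ∈ Set.Ioi c, HasDerivAt Φ
      ((2 * (Real.pi : ℂ) * Complex.I)⁻¹ •
        (Φ t * Mmat m u t (Φ t) - Mmat m u t (Φ t) * Φ t)) t) :
    ∃ H : Matrix (Fin (m + 1)) (Fin (m + 1)) ℂ, H.IsHermitian ∧
      ∃ C : ℝ, 0 < C ∧ ∃ t₀ : ℝ, c < t₀ ∧
        ∀ t : ℝ, t₀ ≤ t → ‖deltaTrunc m m (Φ t) - H‖ ≤ C / t := by
  set s : ℂ := (2 * (Real.pi : ℂ) * Complex.I)⁻¹ with hs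
  set D : ℝ → Matrix (Fin (m+1)) (Fin (m+1)) ℂ :=
    fun t => s • (Φ t * Mmat m u t (Φ t) - Mmat m u t (Φ t) * Φ t) with hD
  -- spread of the u's
  have hm0 : 0 < m := hm
  set u0 : ℝ := u ⟨0, hm0⟩ with hu0
  set W : ℝ := c - u0 with hWdef
  have hu0le : ∀ k : Fin m, u0 ≤ u k := fun k => hu.monotone (by simp [Fin.le_def])
  have hW : ∀ k l : Fin m, |u k - u l| ≤ W := by
    intro k l
    rw [abs_le]
    have h1 := hc k
    have h2 := hc l
    have h3 := hu0le k
    have h4 := hu0le l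
    constructor
    · simp only [hWdef]; linarith
    · simp only [hWdef]; linarith
  have hWnn : 0 ≤ W := by
    have := hu0le ⟨0, hm0⟩; have := hc ⟨0, hm0⟩
    simp only [hWdef]; linarith
  -- Step 1 : trace conservation and entry bounds
  set htr : ℝ → ℂ := fun t => (Φ t * Φ t).trace with htrdef
  have hder : ∀ t ∈ Set.Ioi c, HasDerivAt htr 0 t := by
    intro t ht
    have h1 := (hode t ht).mul (hode t ht)
    have h2 := (traceCLM m).hasFDerivAt.comp_hasDerivAt t h1
    have h3 : traceCLM m (D t * Φ t + Φ t * D t) = 0 := trace_comm_zero (m+1) (Φ t) _ s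
    rw [h3] at h2
    exact h2
  have hconstab : ∀ a b : ℝ, c < a → a ≤ b → htr b = htr a := by
    intro a b ha hab
    have := constant_of_has_deriv_right_zero (f := htr) (a := a) (b := b)
      (fun x hx => ((hder x (lt_of_lt_of_le ha hx.1)).continuousAt).continuousWithinAt)
      (fun x hx => (hder x (lt_of_lt_of_le ha hx.1)).hasDerivWithinAt)
    exact this b ⟨hab, le_refl b⟩
  have hconst : ∀ t ∈ Set.Ioi c, htr t = htr (c+1) := by
    intro t ht
    rcases le_total t (c+1) with h | h
    · exact (hconstab t (c+1) ht h).symm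
    · exact hconstab (c+1) t (by linarith) h
  set B : ℝ := Real.sqrt (htr (c+1)).re with hBdef
  have hBnn : 0 ≤ B := Real.sqrt_nonneg _
  have hB : ∀ t ∈ Set.Ioi c, ∀ i j, ‖Φ t i j‖ ≤ B := by
    intro t ht i j
    have h1 : ‖Φ t i j‖^2 ≤ (htr t).re := herm_entry_sq_le (Φ t) (hherm t ht) i j
    rw [hconst t ht] at h1
    have := Real.sqrt_le_sqrt h1
    rwa [Real.sqrt_sq (norm_nonneg _)] at this
  -- Step 2: derivative of ψ
  set ψ : ℝ → Matrix (Fin (m+1)) (Fin (m+1)) ℂ := fun t => deltaTrunc m m (Φ t) with hψdef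
  have hψder : ∀ t ∈ Set.Ioi c, HasDerivAt ψ (deltaTrunc m m (D t)) t := by
    intro t ht
    exact (deltaCLM m).hasFDerivAt.comp_hasDerivAt t (hode t ht)
  -- Step 2': bound on the derivative
  set K0 : ℝ := ‖s‖ * (((m:ℝ)+1)^2 * (B * B * W)) with hK0def
  have hK0nn : 0 ≤ K0 := by positivity
  have hDbound : ∀ t, c < t → ‖deltaTrunc m m (D t)‖ ≤ K0 / (t - c)^2 := by
    intro t ht
    have htc : 0 < t - c := by linarith
    rw [hD]
    rw [deltaTrunc_smul, norm_smul, key_formula]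
    set X := Matrix.of fun (i j : Fin (m+1)) => if h : (i:ℕ) < m ∧ (j:ℕ) < m then
      Φ t i (Fin.last m) * Φ t (Fin.last m) j *
        (1/((t:ℂ) - (u ⟨j, h.2⟩ : ℝ)) - 1/((t:ℂ) - (u ⟨i, h.1⟩ : ℝ)))
      else 0 with hX
    have hentry : ∀ i j, ‖X i j‖ ≤ B * B * (W / (t - c)^2) := by
      intro i j
      rw [hX, Matrix.of_apply]
      split
      · next h =>
        rw [norm_mul, norm_mul]
        have hcast : (1/((t:ℂ) - (u ⟨j, h.2⟩ : ℝ)) - 1/((t:ℂ) - (u ⟨i, h.1⟩ : ℝ)))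
            = (((1/(t - u ⟨j, h.2⟩) - 1/(t - u ⟨i, h.1⟩) : ℝ)) : ℂ) := by
          push_cast
          ring
        rw [hcast, Complex.norm_real]
        have h1 : |1/(t - u ⟨j, h.2⟩) - 1/(t - u ⟨i, h.1⟩)| ≤ |u ⟨j,h.2⟩ - u ⟨i,h.1⟩| / (t-c)^2 :=
          inv_diff_abs_le (hc _) (hc _) ht
        have h2 : |u ⟨j,h.2⟩ - u ⟨i,h.1⟩| / (t-c)^2 ≤ W / (t-c)^2 := by
          gcongr
          exact hW _ _
        have e1 := hB t ht i (Fin.last m)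
        have e2 := hB t ht (Fin.last m) j
        have e3 : ‖(1/(t - u ⟨j, h.2⟩) - 1/(t - u ⟨i, h.1⟩) : ℝ)‖ ≤ W / (t-c)^2 := by
          rw [Real.norm_eq_abs]; exact h1.trans h2
        exact mul_le_mul (mul_le_mul e1 e2 (norm_nonneg _) hBnn) e3 (norm_nonneg _)
          (by positivity)
      · rw [norm_zero]
        positivity
    have hXnorm : ‖X‖ ≤ ((m:ℝ)+1)^2 * (B * B * (W / (t-c)^2)) := by
      refine (norm_le_sum_entries X).trans ?_
      calc ∑ i, ∑ j, ‖X i j‖ ≤ (∑ _i : Fin (m+1), ∑ _j : Fin (m+1), B * B * (W / (t-c)^2)) := by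
            apply Finset.sum_le_sum
            intro i _
            apply Finset.sum_le_sum
            intro j _
            exact hentry i j
        _ = ((m:ℝ)+1)^2 * (B * B * (W / (t-c)^2)) := by
            simp [Finset.sum_const, Fintype.card_fin, nsmul_eq_mul]
            push_cast
            ring
    calc ‖s‖ * ‖X‖ ≤ ‖s‖ * (((m:ℝ)+1)^2 * (B * B * (W / (t-c)^2))) := by
          exact mul_le_mul_of_nonneg_left hXnorm (norm_nonneg s)
      _ = K0 / (t - c)^2 := by rw [hK0def]; field_simp; try ring
  -- Step 3: choice of t₀, K
  set t₀ : ℝ := max (2 * |c| + 1) (c + 1) with ht₀def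
  have ht₀c : c < t₀ := lt_of_lt_of_le (by linarith) (le_max_right _ _)
  have ht₀1 : 1 ≤ t₀ := by
    have h1 : 2 * |c| + 1 ≤ t₀ := le_max_left _ _
    have := abs_nonneg c
    linarith
  set K : ℝ := 4 * K0 with hKdef
  have hKnn : 0 ≤ K := by positivity
  have hKbound : ∀ t, t₀ ≤ t → ‖deltaTrunc m m (D t)‖ ≤ K / t^2 := by
    intro t htt
    have h2c : 2 * |c| + 1 ≤ t := le_trans (le_max_left _ _) htt
    have hcabs := le_abs_self c
    have h1t : (1:ℝ) ≤ t := le_trans ht₀1 htt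
    have hct : c < t := lt_of_lt_of_le ht₀c htt
    refine (hDbound t hct).trans ?_
    have htc2 : t/2 ≤ t - c := by
      have : c ≤ |c| := hcabs
      linarith
    have h0 : 0 < t - c := by linarith
    have hsq : t^2 / 4 ≤ (t-c)^2 := by nlinarith
    rw [hKdef]
    rw [div_le_div_iff₀ (by positivity) (by positivity)]
    nlinarith
  -- Step 4: MVT estimate
  have hest : ∀ a b : ℝ, t₀ ≤ a → a ≤ b → ‖ψ b - ψ a‖ ≤ K/a - K/b := by
    intro a b ha hab
    have ha0 : 0 < a := lt_of_lt_of_le (by linarith) ha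
    have key := image_norm_le_of_norm_deriv_right_le_deriv_boundary'
      (f := fun x => ψ x - ψ a) (a := a) (b := b)
      (f' := fun x => deltaTrunc m m (D x))
      (B := fun x => K/a - K/x) (B' := fun x => K/x^2)
      ?_ ?_ ?_ ?_ ?_ ?_
    · have := key ⟨hab, le_refl b⟩
      simpa using this
    · intro x hx
      have hcx : c < x := lt_of_lt_of_le ht₀c (le_trans ha hx.1)
      exact ((hψder x hcx).sub_const (ψ a)).continuousAt.continuousWithinAt
    · intro x hx
      have hcx : c < x := lt_of_lt_of_le ht₀c (le_trans ha hx.1)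
      exact ((hψder x hcx).sub_const (ψ a)).hasDerivWithinAt
    · simp
    · apply ContinuousOn.sub continuousOn_const
      apply ContinuousOn.div continuousOn_const continuousOn_id
      intro x hx
      have : 0 < x := lt_of_lt_of_le ha0 hx.1
      exact ne_of_gt this
    · intro x hx
      have hx0 : x ≠ 0 := ne_of_gt (lt_of_lt_of_le ha0 hx.1)
      have h1 : HasDerivAt (fun y : ℝ => K/a - K * y⁻¹) (-(K * -((x:ℝ)^2)⁻¹)) x :=
        ((hasDerivAt_inv hx0).const_mul K).const_sub (K/a)
      have h2 : HasDerivAt (fun y : ℝ => K/a - K/y) (K/x^2) x := by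
        have hfun : (fun y : ℝ => K/a - K/y) = (fun y : ℝ => K/a - K * y⁻¹) := by
          funext y; rw [div_eq_mul_inv K y]
        have hval : K/x^2 = -(K * -((x:ℝ)^2)⁻¹) := by field_simp
        rw [hfun, hval]
        exact h1
      exact h2.hasDerivWithinAt
    · intro x hx
      exact hKbound x (le_trans ha hx.1)
  -- Step 5: Cauchy sequence and limit
  set seq : ℕ → Matrix (Fin (m+1)) (Fin (m+1)) ℂ := fun k => ψ (t₀ + k) with hseqdef
  have ht₀k : ∀ k : ℕ, t₀ ≤ t₀ + k := fun k => by
    have : (0:ℝ) ≤ k := Nat.cast_nonneg k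
    linarith
  have hseqest : ∀ n k N : ℕ, N ≤ n → N ≤ k → dist (seq n) (seq k) ≤ K/(t₀ + N) := by
    have main : ∀ n k : ℕ, k ≤ n → dist (seq n) (seq k) ≤ K/(t₀ + k) := by
      intro n k hkn
      rw [dist_eq_norm]
      have h1 : t₀ + (k:ℝ) ≤ t₀ + n := by
        have : (k:ℝ) ≤ n := Nat.cast_le.mpr hkn
        linarith
      have h2 := hest (t₀ + k) (t₀ + n) (ht₀k k) h1
      have h3 : 0 ≤ K/(t₀ + (n:ℝ)) := by
        apply div_nonneg hKnn
        linarith [ht₀k n, ht₀1]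
      linarith [h2]
    intro n k N hn hk
    rcases le_total k n with h | h
    · refine (main n k h).trans ?_
      apply div_le_div_of_nonneg_left hKnn
      · linarith [ht₀1, (Nat.cast_nonneg N : (0:ℝ) ≤ N)]
      · have : (N:ℝ) ≤ k := Nat.cast_le.mpr hk
        linarith
    · rw [dist_comm]
      refine (main k n h).trans ?_
      apply div_le_div_of_nonneg_left hKnn
      · linarith [ht₀1, (Nat.cast_nonneg N : (0:ℝ) ≤ N)]
      · have : (N:ℝ) ≤ n := Nat.cast_le.mpr hn
        linarith
  have hcauchy : CauchySeq seq := by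
    apply cauchySeq_of_le_tendsto_0 (b := fun N : ℕ => K/(t₀ + N)) hseqest
    apply Filter.Tendsto.div_atTop (tendsto_const_nhds)
    apply Filter.tendsto_atTop_add_const_left
    exact tendsto_natCast_atTop_atTop
  obtain ⟨H, hH⟩ := cauchySeq_tendsto_of_complete hcauchy
  refine ⟨H, ?_, K + 1, by linarith, t₀, ht₀c, ?_⟩
  · -- H is Hermitian
    have hseqherm : ∀ k : ℕ, (seq k)ᴴ = seq k := by
      intro k
      have hmem : t₀ + (k:ℕ) ∈ Set.Ioi c := by
        simp only [Set.mem_Ioi]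
        have := ht₀k k
        linarith [ht₀c]
      rw [hseqdef]
      simp only
      rw [hψdef]
      simp only
      rw [deltaTrunc_conjTranspose, (hherm _ hmem)]
    have hisom : Isometry (fun X : Matrix (Fin (m+1)) (Fin (m+1)) ℂ => Xᴴ) := by
      apply Isometry.of_dist_eq
      intro X Y
      rw [dist_eq_norm, dist_eq_norm, ← Matrix.conjTranspose_sub, Matrix.l2_opNorm_conjTranspose]
    have h2 : Filter.Tendsto (fun k => (seq k)ᴴ) Filter.atTop (nhds Hᴴ) :=
      (hisom.continuous.tendsto H).comp hH
    have h3 : Filter.Tendsto seq Filter.atTop (nhds Hᴴ) := by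
      apply h2.congr
      intro k
      exact hseqherm k
    exact tendsto_nhds_unique h3 hH
  · -- the estimate
    intro t htt
    have ht0 : 0 < t := lt_of_lt_of_le (by linarith) htt
    have hlim : Filter.Tendsto (fun k => ‖ψ t - seq k‖) Filter.atTop (nhds ‖ψ t - H‖) :=
      (Filter.Tendsto.sub tendsto_const_nhds hH).norm
    have hev : ∀ᶠ k in Filter.atTop, ‖ψ t - seq k‖ ≤ K/t := by
      rw [Filter.eventually_atTop]
      refine ⟨⌈t - t₀⌉₊, fun k hk => ?_⟩
      have h1 : t ≤ t₀ + k := by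
        have h2 : t - t₀ ≤ (⌈t - t₀⌉₊ : ℝ) := Nat.le_ceil _
        have h3 : ((⌈t - t₀⌉₊ : ℕ) : ℝ) ≤ k := Nat.cast_le.mpr hk
        linarith
      rw [norm_sub_rev]
      have h4 := hest t (t₀ + k) htt h1
      have h5 : 0 ≤ K/(t₀ + (k:ℝ)) := div_nonneg hKnn (by linarith [ht₀1, (Nat.cast_nonneg k : (0:ℝ) ≤ k)])
      linarith
    have h6 : ‖ψ t - H‖ ≤ K/t := le_of_tendsto hlim hev
    refine h6.trans ?_
    gcongr
    linarith
end Main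
end
end

section
/- Let k ≥ 1 and let B be a (k+1)×(k+1) complex Hermitian matrix of arrow form: B_{ii} = λ_i for 1 ≤ i ≤ k with λ_1,...,λ_k pairwise distinct reals, B_{ij} = 0 for i ≠ j with i, j ≤ k, B_{i,k+1} = a_i ∈ ℂ and B_{k+1,i} = conj(a_i) for i ≤ k, and B_{k+1,k+1} = c ∈ ℝ. Let μ_1,...,μ_{k+1} ∈ ℝ be the eigenvalues of B counted with multiplicity, i.e. det(X·Id − B) = ∏_{j=1}^{k+1}(X − μ_j). Then for every i ∈ {1,...,k}: |a_i|²·∏_{l≠i, 1≤l≤k}(λ_i − λ_l) = −∏_{j=1}^{k+1}(λ_i − μ_j). -/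
open Matrix

noncomputable section

/-- The Hermitian arrow (bordered diagonal) matrix with leading diagonal block
`diag(λ_1,...,λ_k)`, border entries `a_i` (and their conjugates) and corner entry `c`. -/
def arrowMatrix (k : ℕ) (lam : Fin k → ℝ) (a : Fin k → ℂ) (c : ℝ) :
    Matrix (Fin (k + 1)) (Fin (k + 1)) ℂ :=
  Matrix.of fun i j =>
    if hi : i = Fin.last k then
      (if hj : j = Fin.last k then (c : ℂ) else (starRingEnd ℂ) (a (j.castPred hj)))
    else
      (if hj : j = Fin.last k then a (i.castPred hi)
       else if i = j then (lam (i.castPred hi) : ℂ) else 0)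

lemma arrow_block (k : ℕ) (lam : Fin k → ℝ) (a : Fin k → ℂ) (c : ℝ) (X : ℂ) :
    (X • (1 : Matrix (Fin (k + 1)) (Fin (k + 1)) ℂ) - arrowMatrix k lam a c).submatrix
      (finSumFinEquiv (m := k) (n := 1)) (finSumFinEquiv (m := k) (n := 1)) =
    fromBlocks (diagonal (fun l => X - (lam l : ℂ)))
      (Matrix.of fun l (_ : Fin 1) => -(a l))
      (Matrix.of fun (_ : Fin 1) l => -((starRingEnd ℂ) (a l)))
      (Matrix.of fun _ _ => X - (c : ℂ)) := by
  have hlast : ∀ i : Fin 1, finSumFinEquiv (m := k) (Sum.inr i) = Fin.last k := by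
    intro i
    fin_cases i
    simp [finSumFinEquiv_apply_right, Fin.ext_iff]
  have hcast : ∀ i : Fin k, finSumFinEquiv (m := k) (n := 1) (Sum.inl i) = i.castSucc := by
    intro i; rfl
  ext i j
  cases i with
  | inl i =>
    cases j with
    | inl j =>
      simp only [submatrix_apply, hcast, fromBlocks_apply₁₁, Matrix.sub_apply, Matrix.smul_apply,
        Matrix.one_apply, smul_eq_mul, arrowMatrix, Matrix.of_apply, diagonal_apply]
      rw [dif_neg (Fin.castSucc_lt_last i).ne, dif_neg (Fin.castSucc_lt_last j).ne]
      by_cases h : i = j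
      · subst h; simp [Fin.castPred_castSucc]
      · simp [h, (Fin.castSucc_inj (a := i) (b := j)).not.2 h]
    | inr j =>
      simp only [submatrix_apply, hcast, hlast, fromBlocks_apply₁₂, Matrix.sub_apply, Matrix.smul_apply,
        Matrix.one_apply, smul_eq_mul, arrowMatrix, Matrix.of_apply]
      rw [dif_neg (Fin.castSucc_lt_last i).ne]
      simp [(Fin.castSucc_lt_last i).ne, Fin.castPred_castSucc]
  | inr i =>
    cases j with
    | inl j =>
      simp only [submatrix_apply, hcast, hlast, fromBlocks_apply₂₁, Matrix.sub_apply, Matrix.smul_apply,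
        Matrix.one_apply, smul_eq_mul, arrowMatrix, Matrix.of_apply]
      simp [(Fin.castSucc_lt_last j).ne, (Fin.castSucc_lt_last j).ne', Fin.castPred_castSucc]
    | inr j =>
      simp only [submatrix_apply, hlast, fromBlocks_apply₂₂, Matrix.sub_apply, Matrix.smul_apply,
        Matrix.one_apply, smul_eq_mul, arrowMatrix, Matrix.of_apply]
      simp

lemma arrow_det (k : ℕ) (lam : Fin k → ℝ) (a : Fin k → ℂ) (c : ℝ) (X : ℂ)
    (hX : ∀ l, X ≠ (lam l : ℂ)) :
    (X • (1 : Matrix (Fin (k + 1)) (Fin (k + 1)) ℂ) - arrowMatrix k lam a c).det =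
      (X - c) * ∏ l : Fin k, (X - (lam l : ℂ)) -
        ∑ l : Fin k, (a l * (starRingEnd ℂ) (a l)) *
          ∏ m ∈ Finset.univ.erase l, (X - (lam m : ℂ)) := by
  have hne : ∀ l, X - (lam l : ℂ) ≠ 0 := fun l => sub_ne_zero.2 (hX l)
  rw [← det_submatrix_equiv_self (finSumFinEquiv (m := k) (n := 1)), arrow_block]
  haveI : Invertible (diagonal fun l : Fin k => X - (lam l : ℂ)) :=
    (diagonal _).invertibleOfIsUnitDet (by
      rw [det_diagonal]
      exact (Finset.prod_ne_zero_iff.2 fun l _ => hne l).isUnit)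
  have hinv : ⅟(diagonal fun l : Fin k => X - (lam l : ℂ)) =
      diagonal (fun l => (X - (lam l : ℂ))⁻¹) :=
    invOf_eq_right_inv (by
      rw [diagonal_mul_diagonal]
      convert Matrix.diagonal_one using 2
      funext l
      exact mul_inv_cancel₀ (hne l))
  rw [det_fromBlocks₁₁, hinv, det_diagonal, det_fin_one]
  simp only [Matrix.sub_apply, Matrix.of_apply, Matrix.mul_apply, Matrix.mul_diagonal,
    diagonal_apply, mul_ite, mul_zero, ite_mul, zero_mul, Finset.sum_ite_eq',
    Finset.mem_univ, if_true]
  have hsum : (∏ i : Fin k, (X - (lam i : ℂ))) *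
      ∑ x : Fin k, -(starRingEnd ℂ) (a x) * (X - (lam x : ℂ))⁻¹ * -a x =
      ∑ l : Fin k, a l * (starRingEnd ℂ) (a l) *
        ∏ i ∈ Finset.univ.erase l, (X - (lam i : ℂ)) := by
    rw [Finset.mul_sum]
    refine Finset.sum_congr rfl fun l _ => ?_
    rw [← Finset.mul_prod_erase Finset.univ (fun m => X - (lam m : ℂ)) (Finset.mem_univ l)]
    have h := mul_inv_cancel₀ (hne l)
    linear_combination (a l * (starRingEnd ℂ) (a l) *
      ∏ i ∈ Finset.univ.erase l, (X - (lam i : ℂ))) * h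
  rw [mul_sub, hsum, mul_comm]

/-- For an arrow Hermitian matrix with pairwise distinct diagonal entries `λ_i` and
eigenvalues `μ_1,...,μ_{k+1}`, the squared moduli of the border entries satisfy
`|a_i|²·∏_{l≠i}(λ_i − λ_l) = −∏_j(λ_i − μ_j)`. -/
theorem stmt12 (k : ℕ) (hk : 1 ≤ k) (lam : Fin k → ℝ)
    (hlam : Function.Injective lam) (a : Fin k → ℂ) (c : ℝ) (μ : Fin (k + 1) → ℝ)
    (hchar : ∀ X : ℂ,
      (X • (1 : Matrix (Fin (k + 1)) (Fin (k + 1)) ℂ) - arrowMatrix k lam a c).det =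
        ∏ j : Fin (k + 1), (X - (μ j : ℂ))) :
    ∀ i : Fin k,
      (a i * (starRingEnd ℂ) (a i)) *
          ∏ l ∈ Finset.univ.erase i, ((lam i : ℂ) - (lam l : ℂ)) =
        - ∏ j : Fin (k + 1), ((lam i : ℂ) - (μ j : ℂ)) := by
  classical
  intro i
  set p : Polynomial ℂ :=
    (Polynomial.X - Polynomial.C (c : ℂ)) *
        ∏ l : Fin k, (Polynomial.X - Polynomial.C ((lam l : ℂ))) -
      ∑ l : Fin k, Polynomial.C (a l * (starRingEnd ℂ) (a l)) *
        ∏ m ∈ Finset.univ.erase l, (Polynomial.X - Polynomial.C ((lam m : ℂ))) -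
      ∏ j : Fin (k + 1), (Polynomial.X - Polynomial.C ((μ j : ℂ))) with hp
  have heval : ∀ x : ℂ, p.eval x =
      (x - c) * ∏ l : Fin k, (x - (lam l : ℂ)) -
        ∑ l : Fin k, (a l * (starRingEnd ℂ) (a l)) *
          ∏ m ∈ Finset.univ.erase l, (x - (lam m : ℂ)) -
        ∏ j : Fin (k + 1), (x - (μ j : ℂ)) := by
    intro x
    simp [hp, Polynomial.eval_prod, Polynomial.eval_finset_sum]
  have hzero : p = 0 := by
    refine Polynomial.eq_zero_of_infinite_isRoot p ?_
    have hsub : (Set.range fun l : Fin k => ((lam l : ℂ)))ᶜ ⊆ {x | p.IsRoot x} := by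
      intro x hx
      have hx' : ∀ l, x ≠ (lam l : ℂ) := by
        intro l h
        exact hx ⟨l, h.symm⟩
      have := arrow_det k lam a c x hx'
      rw [hchar x] at this
      simp only [Polynomial.IsRoot, Set.mem_setOf_eq, heval x, this]
      ring
    exact Set.Infinite.mono hsub ((Set.finite_range _).infinite_compl)
  have h0 := heval ((lam i : ℂ))
  rw [hzero, Polynomial.eval_zero] at h0
  have h1 : ∏ l : Fin k, ((lam i : ℂ) - (lam l : ℂ)) = 0 :=
    Finset.prod_eq_zero (Finset.mem_univ i) (sub_self _)
  have h2 : ∑ l : Fin k, (a l * (starRingEnd ℂ) (a l)) *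
      ∏ m ∈ Finset.univ.erase l, ((lam i : ℂ) - (lam m : ℂ)) =
      (a i * (starRingEnd ℂ) (a i)) *
        ∏ m ∈ Finset.univ.erase i, ((lam i : ℂ) - (lam m : ℂ)) := by
    refine Finset.sum_eq_single i (fun l _ hl => ?_) (by simp)
    have : i ∈ Finset.univ.erase l := Finset.mem_erase.2 ⟨fun h => hl h.symm, Finset.mem_univ i⟩
    rw [Finset.prod_eq_zero this (sub_self ((lam i : ℂ))), mul_zero]
  rw [h1, h2, mul_zero, zero_sub] at h0
  linear_combination h0
end
end

section
/- Let n ≥ 2 and 1 ≤ k ≤ n−1, and let Λ = (λ^{(m)}_i)_{1≤i≤m≤n} be a Gelfand-Tsetlin pattern of size n with integer entries, i.e. λ^{(m)}_i ∈ ℤ and λ^{(m)}_i ≥ λ^{(m−1)}_i ≥ λ^{(m)}_{i+1} for all 1 ≤ i ≤ m−1 ≤ n−1; use the convention λ^{(m)}_j := 0 for j < 1 or j > m and λ^{(0)}_j := 0. Define x^{(k)}_j(Λ) = −λ^{(k)}_j + λ^{(k−1)}_{j−1} − λ^{(k)}_{j−1} + λ^{(k+1)}_j, X^{(k)}_j(Λ)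 = ∑_{i=1}^{j} x^{(k)}_i(Λ) and ε_k(Λ) = max{X^{(k)}_1(Λ),...,X^{(k)}_k(Λ)}. Suppose ε_k(Λ) > 0 and let l = min{j ∈ {1,...,k} : X^{(k)}_j(Λ) = ε_k(Λ)}. Then the array Λ + δ^{(k)}_l, obtained from Λ by replacing λ^{(k)}_l with λ^{(k)}_l + 1, is again a Gelfand-Tsetlin pattern. -/
noncomputable section

/-- An integer Gelfand-Tsetlin pattern of size `n`: a triangular array `Λ m i`
(`1 ≤ i ≤ m ≤ n`, out-of-range entries zero) satisfying the interlacing conditions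
`λ^{(m)}_i ≥ λ^{(m−1)}_i ≥ λ^{(m)}_{i+1}`. -/
def IsGTPattern (n : ℕ) (Λ : ℕ → ℕ → ℤ) : Prop :=
  (∀ m i : ℕ, (i = 0 ∨ m < i ∨ n < m) → Λ m i = 0) ∧
  (∀ m i : ℕ, 1 ≤ i → i + 1 ≤ m → m ≤ n →
    Λ (m - 1) i ≤ Λ m i ∧ Λ m (i + 1) ≤ Λ (m - 1) i)

/-- `x^{(k)}_j(Λ) = −λ^{(k)}_j + λ^{(k−1)}_{j−1} − λ^{(k)}_{j−1} + λ^{(k+1)}_j`. -/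
def xval (Λ : ℕ → ℕ → ℤ) (k j : ℕ) : ℤ :=
  -Λ k j + Λ (k - 1) (j - 1) - Λ k (j - 1) + Λ (k + 1) j

/-- `X^{(k)}_j(Λ) = ∑_{i=1}^{j} x^{(k)}_i(Λ)`. -/
def Xval (Λ : ℕ → ℕ → ℤ) (k j : ℕ) : ℤ := ∑ i ∈ Finset.Icc 1 j, xval Λ k i

/-- Well-definedness of the crystal raising operator `ẽ_k` on integer Gelfand-Tsetlin
patterns: if `ε_k(Λ) > 0` and `l` is the smallest index in `{1,...,k}` at which
`X^{(k)}` attains its maximum `ε_k(Λ)`, then increasing `λ^{(k)}_l` by `1` yields again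
a Gelfand-Tsetlin pattern. -/
theorem stmt17 (n k : ℕ) (hn : 2 ≤ n) (hk1 : 1 ≤ k) (hk : k ≤ n - 1)
    (Λ : ℕ → ℕ → ℤ) (hΛ : IsGTPattern n Λ)
    (l : ℕ) (hl : l ∈ Finset.Icc 1 k)
    (hmax : ∀ j ∈ Finset.Icc 1 k, Xval Λ k j ≤ Xval Λ k l)
    (hpos : 0 < Xval Λ k l)
    (hmin : ∀ j ∈ Finset.Icc 1 k, Xval Λ k j = Xval Λ k l → l ≤ j) :
    IsGTPattern n (fun m i => if m = k ∧ i = l then Λ k l + 1 else Λ m i) := by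

  obtain ⟨hzero, hintl⟩ := hΛ
  obtain ⟨hl1, hlk⟩ := Finset.mem_Icc.mp hl
  have hkn' : k + 1 ≤ n := by omega
  -- the key fact: x^{(k)}_l > 0
  have hx : 0 < xval Λ k l := by
    rcases Nat.eq_or_lt_of_le hl1 with h1 | h2
    · have hX1 : Xval Λ k 1 = xval Λ k 1 := by simp [Xval]
      have h1' : l = 1 := h1.symm
      subst h1'
      rw [hX1] at hpos
      exact hpos
    · obtain ⟨m, rfl⟩ : ∃ m, l = m + 1 := ⟨l - 1, by omega⟩
      have hsum : Xval Λ k (m + 1) = Xval Λ k m + xval Λ k (m + 1) := by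
        unfold Xval
        rw [Finset.sum_Icc_succ_top (by omega)]
      have hmem : m ∈ Finset.Icc 1 k := Finset.mem_Icc.mpr ⟨by omega, by omega⟩
      have hle : Xval Λ k m ≤ Xval Λ k (m + 1) := hmax m hmem
      have hne : Xval Λ k m ≠ Xval Λ k (m + 1) := by
        intro h
        have := hmin m hmem h
        omega
      have : Xval Λ k m < Xval Λ k (m + 1) := lt_of_le_of_ne hle hne
      omega
  have hxval : 0 < -Λ k l + Λ (k - 1) (l - 1) - Λ k (l - 1) + Λ (k + 1) l := hx
  -- fact (A): Λ k l < Λ (k+1) l ; fact (B): for l ≥ 2, Λ k l < Λ (k-1) (l-1)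
  have hAB : Λ k l < Λ (k + 1) l ∧ (2 ≤ l → Λ k l < Λ (k - 1) (l - 1)) := by
    rcases Nat.eq_or_lt_of_le hl1 with h1 | h2
    · have hz0 : Λ (k - 1) (l - 1) = 0 := hzero _ _ (Or.inl (by omega))
      have hz1 : Λ k (l - 1) = 0 := hzero _ _ (Or.inl (by omega))
      constructor
      · omega
      · omega
    · have e1 : Λ (k - 1) (l - 1) ≤ Λ k (l - 1) :=
        (hintl k (l - 1) (by omega) (by omega) (by omega)).1
      have e2 : Λ (k + 1) (l - 1 + 1) ≤ Λ (k + 1 - 1) (l - 1) :=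
        (hintl (k + 1) (l - 1) (by omega) (by omega) (by omega)).2
      have el : l - 1 + 1 = l := by omega
      have ek : k + 1 - 1 = k := by omega
      rw [el, ek] at e2
      constructor
      · omega
      · intro _; omega
  obtain ⟨hA, hB⟩ := hAB
  constructor
  · intro m i h
    simp only
    split_ifs with hc
    · exfalso
      obtain ⟨rfl, rfl⟩ := hc
      omega
    · exact hzero m i h
  · intro m i hi him hmn
    have base := hintl m i hi him hmn
    simp only
    refine ⟨?_, ?_⟩
    · split_ifs with h1 h2 h2
      · exfalso; omega
      · obtain ⟨hm, rfl⟩ := h1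
        have hm' : m = k + 1 := by omega
        subst hm'
        omega
      · obtain ⟨rfl, rfl⟩ := h2
        have := base.1
        omega
      · exact base.1
    · split_ifs with h1 h2 h2
      · exfalso; omega
      · obtain ⟨rfl, hil⟩ := h1
        have hi' : i = l - 1 := by omega
        subst hi'
        have := hB (by omega)
        omega
      · obtain ⟨hm, rfl⟩ := h2
        have hm' : m = k + 1 := by omega
        subst hm'
        have hb := base.2
        rw [show k + 1 - 1 = k from rfl] at hb
        omega
      · exact base.2
end
end

section
/- Let n ≥ 2 and 1 ≤ k ≤ n−1, and let Λ = (λ^{(m)}_i)_{1≤i≤m≤n} be a Gelfand-Tsetlin pattern of size n with integer entries, i.e. λ^{(m)}_i ∈ ℤ and λ^{(m)}_i ≥ λ^{(m−1)}_i ≥ λ^{(m)}_{i+1} for all 1 ≤ i ≤ m−1 ≤ n−1; use the convention λ^{(m)}_j := 0 for j < 1 or j > m and λ^{(0)}_j := 0. Define y^{(k)}_j(Λ) = λ^{(k)}_j − λ^{(k−1)}_j + λ^{(k)}_{j+1} − λ^{(k+1)}_{j+1}, Y^{(k)}_j(Λ) = ∑_{i=j}^{k} y^{(k)}_i(Λ)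 and φ_k(Λ) = max{Y^{(k)}_1(Λ),...,Y^{(k)}_k(Λ)}. Suppose φ_k(Λ) > 0 and let l = max{j ∈ {1,...,k} : Y^{(k)}_j(Λ) = φ_k(Λ)}. Then the array Λ − δ^{(k)}_l, obtained from Λ by replacing λ^{(k)}_l with λ^{(k)}_l − 1, is again a Gelfand-Tsetlin pattern. -/
noncomputable section

/-- `y^{(k)}_j(Λ) = λ^{(k)}_j − λ^{(k−1)}_j + λ^{(k)}_{j+1} − λ^{(k+1)}_{j+1}`. -/
def yval (Λ : ℕ → ℕ → ℤ) (k j : ℕ) : ℤ :=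
  Λ k j - Λ (k - 1) j + Λ k (j + 1) - Λ (k + 1) (j + 1)

/-- `Y^{(k)}_j(Λ) = ∑_{i=j}^{k} y^{(k)}_i(Λ)`. -/
def Yval (Λ : ℕ → ℕ → ℤ) (k j : ℕ) : ℤ := ∑ i ∈ Finset.Icc j k, yval Λ k i

/-- Well-definedness of the crystal lowering operator `f̃_k` on integer Gelfand-Tsetlin
patterns: if `φ_k(Λ) > 0` and `l` is the largest index in `{1,...,k}` at which `Y^{(k)}`
attains its maximum `φ_k(Λ)`, then decreasing `λ^{(k)}_l` by `1` yields again a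
Gelfand-Tsetlin pattern. -/
theorem stmt18 (n k : ℕ) (hn : 2 ≤ n) (hk1 : 1 ≤ k) (hk : k ≤ n - 1)
    (Λ : ℕ → ℕ → ℤ) (hΛ : IsGTPattern n Λ)
    (l : ℕ) (hl : l ∈ Finset.Icc 1 k)
    (hmax : ∀ j ∈ Finset.Icc 1 k, Yval Λ k j ≤ Yval Λ k l)
    (hpos : 0 < Yval Λ k l)
    (hargmax : ∀ j ∈ Finset.Icc 1 k, Yval Λ k j = Yval Λ k l → j ≤ l) :
    IsGTPattern n (fun m i => if m = k ∧ i = l then Λ k l - 1 else Λ m i) := by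
  obtain ⟨hzero, hineq⟩ := hΛ
  obtain ⟨hl1, hlk⟩ := Finset.mem_Icc.mp hl
  have hkn : k ≤ n := by omega
  have hk1n : k + 1 ≤ n := by omega
  -- strict inequality used when l < k
  have hkey : l + 1 ≤ k → 0 < yval Λ k l := by
    intro hlt
    have hmem : l + 1 ∈ Finset.Icc 1 k := Finset.mem_Icc.mpr ⟨by omega, hlt⟩
    have hle : Yval Λ k (l + 1) ≤ Yval Λ k l := hmax _ hmem
    have hne : Yval Λ k (l + 1) ≠ Yval Λ k l := by
      intro h
      have := hargmax _ hmem h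
      omega
    have hsplit : Yval Λ k l = yval Λ k l + Yval Λ k (l + 1) := by
      unfold Yval
      rw [← Finset.sum_insert (by simp)]
      congr 1
      ext x; simp [Finset.mem_Icc]; omega
    have := lt_of_le_of_ne hle hne
    omega
  have hB : Λ (k + 1) (l + 1) < Λ k l := by
    rcases eq_or_lt_of_le hlk with heq | hlt
    · subst heq
      have h1 : Λ (l - 1) l = 0 := hzero _ _ (by omega)
      have h2 : Λ l (l + 1) = 0 := hzero _ _ (by omega)
      have hY : Yval Λ l l = yval Λ l l := by
        unfold Yval; rw [Finset.Icc_self, Finset.sum_singleton]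
      rw [hY] at hpos
      unfold yval at hpos
      omega
    · have hy := hkey (by omega)
      have h1 : Λ k (l + 1) ≤ Λ (k - 1) l := (hineq k l hl1 (by omega) hkn).2
      unfold yval at hy
      omega
  have hA : l + 1 ≤ k → Λ (k - 1) l < Λ k l := by
    intro hlt
    have hy := hkey hlt
    have h2 : Λ ((k + 1) - 1) (l + 1) ≤ Λ (k + 1) (l + 1) :=
      (hineq (k + 1) (l + 1) (by omega) (by omega) hk1n).1
    simp only [Nat.add_sub_cancel] at h2
    unfold yval at hy
    omega
  constructor
  · intro m i h
    have hne : ¬(m = k ∧ i = l) := by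
      rintro ⟨rfl, rfl⟩; omega
    simp only [hne, if_false]
    exact hzero m i h
  · intro m i hi him hm
    obtain ⟨b1, b2⟩ := hineq m i hi him hm
    constructor
    · simp only []
      split_ifs with h1 h2 h2
      · obtain ⟨e1, _⟩ := h1; obtain ⟨e2, _⟩ := h2; omega
      · obtain ⟨e1, e2⟩ := h1
        have : m - 1 = k := e1
        have hmk : m = k + 1 := by omega
        subst hmk; subst e2
        simp only [Nat.add_sub_cancel] at b1
        omega
      · obtain ⟨e1, e2⟩ := h2
        subst e1; subst e2
        have := hA (by omega)
        omega
      · exact b1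
    · simp only []
      split_ifs with h1 h2 h2
      · obtain ⟨e1, _⟩ := h1; obtain ⟨e2, _⟩ := h2; omega
      · obtain ⟨e1, e2⟩ := h1
        subst e1; subst e2
        omega
      · obtain ⟨e1, e2⟩ := h2
        have hmk : m = k + 1 := by omega
        subst hmk; subst e2
        simp only [Nat.add_sub_cancel] at b2 ⊢
        omega
      · exact b2
end
end

section
/- Let n ≥ 2 and 1 ≤ k ≤ n−1, and let Λ be an integer Gelfand-Tsetlin pattern of size n (conventions as below). Define x^{(k)}_j, y^{(k)}_j, X^{(k)}_j, Y^{(k)}_j, ε_k, φ_k as follows: x^{(k)}_j(Λ) = −λ^{(k)}_j + λ^{(k−1)}_{j−1} − λ^{(k)}_{j−1} + λ^{(k+1)}_j, y^{(k)}_j(Λ) = λ^{(k)}_j − λ^{(k−1)}_j + λ^{(k)}_{j+1} − λ^{(k+1)}_{j+1}, X^{(k)}_j = ∑_{i=1}^{j} x^{(k)}_i, Y^{(k)}_j = ∑_{i=j}^{k} y^{(k)}_i, ε_k = max{X^{(k)}_1,...,X^{(k)}_k}, φ_k = max{Y^{(k)}_1,...,Y^{(k)}_k}. Suppose ε_k(Λ)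 > 0, let l = min{j : X^{(k)}_j(Λ) = ε_k(Λ)}, and set Λ′ = Λ + δ^{(k)}_l. Then: (i) ε_k(Λ′) = ε_k(Λ) − 1; (ii) φ_k(Λ′) = φ_k(Λ) + 1 > 0; and (iii) max{j ∈ {1,...,k} : Y^{(k)}_j(Λ′) = φ_k(Λ′)} = l, so that removing 1 from the entry λ^{(k)}_l of Λ′ at the lowering-operator position recovers Λ (i.e. f̃_k(ẽ_k(Λ)) = Λ). -/
noncomputable section

/-- `ε_k(Λ) = max{X^{(k)}_1(Λ),...,X^{(k)}_k(Λ)}`. -/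
def eps (k : ℕ) (hk : 1 ≤ k) (Λ : ℕ → ℕ → ℤ) : ℤ :=
  (Finset.Icc 1 k).sup' ⟨1, Finset.mem_Icc.mpr ⟨le_rfl, hk⟩⟩ (Xval Λ k)

/-- `φ_k(Λ) = max{Y^{(k)}_1(Λ),...,Y^{(k)}_k(Λ)}`. -/
def phi (k : ℕ) (hk : 1 ≤ k) (Λ : ℕ → ℕ → ℤ) : ℤ :=
  (Finset.Icc 1 k).sup' ⟨1, Finset.mem_Icc.mpr ⟨le_rfl, hk⟩⟩ (Yval Λ k)

lemma yval_eq_neg_xval (Λ : ℕ → ℕ → ℤ) (k j : ℕ) :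
    yval Λ k j = -xval Λ k (j + 1) := by
  simp only [yval, xval, Nat.add_sub_cancel]
  ring

lemma Yval_eq_Xval (Λ : ℕ → ℕ → ℤ) (k j : ℕ) (hj : j ≤ k) :
    Yval Λ k j = Xval Λ k j - Xval Λ k (k + 1) := by
  have h1 : Yval Λ k j = -∑ i ∈ Finset.Icc j k, xval Λ k (i + 1) := by
    rw [Yval, ← Finset.sum_neg_distrib]
    exact Finset.sum_congr rfl fun i _ => yval_eq_neg_xval Λ k i
  have h2 : ∑ i ∈ Finset.Icc j k, xval Λ k (i + 1)
      = ∑ i ∈ Finset.Icc (j + 1) (k + 1), xval Λ k i := by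
    rw [← Finset.map_add_right_Icc j k 1, Finset.sum_map]
    rfl
  have h3 : Xval Λ k j + ∑ i ∈ Finset.Icc (j + 1) (k + 1), xval Λ k i
      = Xval Λ k (k + 1) := by
    rw [Xval, Xval, (show Finset.Icc 1 j = Finset.Ioc 0 j from Finset.Icc_add_one_left_eq_Ioc (0:ℕ) j), Finset.Icc_add_one_left_eq_Ioc j (k + 1), (show Finset.Icc 1 (k + 1) = Finset.Ioc 0 (k + 1) from Finset.Icc_add_one_left_eq_Ioc (0:ℕ) (k + 1)),
      ← Finset.sum_union]
    · rw [Finset.Ioc_union_Ioc_eq_Ioc (Nat.zero_le j) (by omega)]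
    · rw [Finset.disjoint_left]
      intro a ha hb
      simp only [Finset.mem_Ioc] at ha hb
      omega
  rw [h1, h2]
  omega

lemma sup'_sub_const {s : Finset ℕ} (hs : s.Nonempty) (f : ℕ → ℤ) (c : ℤ) :
    s.sup' hs (fun j => f j - c) = s.sup' hs f - c := by
  apply le_antisymm
  · exact Finset.sup'_le _ _ fun b hb => sub_le_sub_right (Finset.le_sup' f hb) c
  · rw [sub_le_iff_le_add]
    refine Finset.sup'_le _ _ fun b hb => ?_
    have := Finset.le_sup' (fun j => f j - c) hb
    omega

lemma Xval_update (Λ : ℕ → ℕ → ℤ) (k l : ℕ) (hk1 : 1 ≤ k) (hl : 1 ≤ l) (j : ℕ) :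
    Xval (fun m i => if m = k ∧ i = l then Λ k l + 1 else Λ m i) k j
      = Xval Λ k j - (if l ≤ j then 1 else 0) - (if l + 1 ≤ j then 1 else 0) := by
  have key : ∀ i ∈ Finset.Icc 1 j,
      xval (fun m i => if m = k ∧ i = l then Λ k l + 1 else Λ m i) k i
        = xval Λ k i - (if i = l then 1 else 0) - (if i = l + 1 then 1 else 0) := by
    intro i hi
    simp only [Finset.mem_Icc] at hi
    have h1 : ¬(k - 1 = k) := by omega
    have h2 : ¬(k + 1 = k) := by omega
    have him : (i - 1 = l) ↔ (i = l + 1) := by omega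
    simp only [xval, h1, h2, false_and, if_false, true_and, eq_self_iff_true, him]
    by_cases e1 : i = l
    · subst e1
      have e2 : ¬ (i = i + 1) := by omega
      simp only [if_pos rfl, if_neg e2, if_true, if_false]
      ring
    · by_cases e2 : i = l + 1
      · subst e2
        simp only [if_neg e1, if_pos rfl, if_true, if_false, Nat.add_sub_cancel]
        ring
      · simp only [if_neg e1, if_neg e2, if_true, if_false]
        ring
  rw [Xval, Finset.sum_congr rfl key]
  rw [Finset.sum_sub_distrib, Finset.sum_sub_distrib]
  rw [Finset.sum_ite_eq' (Finset.Icc 1 j) l (fun _ => (1:ℤ)),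
    Finset.sum_ite_eq' (Finset.Icc 1 j) (l+1) (fun _ => (1:ℤ))]
  simp only [Finset.mem_Icc]
  rw [show Xval Λ k j = ∑ i ∈ Finset.Icc 1 j, xval Λ k i from rfl]
  congr 1 <;> [skip; split_ifs <;> omega]
  congr 1
  split_ifs <;> omega

/-- Crystal axioms relating `ẽ_k`, `f̃_k`, `ε_k`, `φ_k` on integer Gelfand-Tsetlin
patterns: if `ε_k(Λ) > 0`, `l` is the smallest index in `{1,...,k}` with
`X^{(k)}_l(Λ) = ε_k(Λ)`, and `Λ′ = Λ + δ^{(k)}_l`, then `ε_k(Λ′) = ε_k(Λ) − 1`,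
`φ_k(Λ′) = φ_k(Λ) + 1 > 0`, the largest index in `{1,...,k}` at which `Y^{(k)}(Λ′)`
attains `φ_k(Λ′)` is again `l`, and subtracting `1` at that entry recovers `Λ`
(i.e. `f̃_k(ẽ_k(Λ)) = Λ`). -/
theorem stmt19 (n k : ℕ) (hn : 2 ≤ n) (hk1 : 1 ≤ k) (hk : k ≤ n - 1)
    (Λ : ℕ → ℕ → ℤ) (hΛ : IsGTPattern n Λ)
    (hpos : 0 < eps k hk1 Λ)
    (l : ℕ) (hl : l ∈ Finset.Icc 1 k)
    (hattain : Xval Λ k l = eps k hk1 Λ)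
    (hmin : ∀ j ∈ Finset.Icc 1 k, Xval Λ k j = eps k hk1 Λ → l ≤ j) :
    ∀ Λ' : ℕ → ℕ → ℤ,
      Λ' = (fun m i => if m = k ∧ i = l then Λ k l + 1 else Λ m i) →
      eps k hk1 Λ' = eps k hk1 Λ - 1 ∧
      phi k hk1 Λ' = phi k hk1 Λ + 1 ∧
      0 < phi k hk1 Λ' ∧
      Yval Λ' k l = phi k hk1 Λ' ∧
      (∀ j ∈ Finset.Icc 1 k, Yval Λ' k j = phi k hk1 Λ' → j ≤ l) ∧
      (fun m i => if m = k ∧ i = l then Λ' k l - 1 else Λ' m i) = Λ := by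
  intro Λ' hΛ'
  obtain ⟨hl1, hlk⟩ := Finset.mem_Icc.mp hl
  have hX : ∀ j, Xval Λ' k j = Xval Λ k j - (if l ≤ j then 1 else 0)
      - (if l + 1 ≤ j then 1 else 0) := by
    intro j; rw [hΛ']; exact Xval_update Λ k l hk1 hl1 j
  have hXle : ∀ j ∈ Finset.Icc 1 k, Xval Λ k j ≤ eps k hk1 Λ :=
    fun j hj => Finset.le_sup' _ hj
  -- ε decreases by 1
  have hXl' : Xval Λ' k l = eps k hk1 Λ - 1 := by
    rw [hX l, hattain, if_pos le_rfl, if_neg (by omega)]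
    ring
  have heps' : eps k hk1 Λ' = eps k hk1 Λ - 1 := by
    apply le_antisymm
    · refine Finset.sup'_le _ _ fun j hj => ?_
      rw [hX j]
      rcases lt_or_ge j l with h | h
      · have hne : Xval Λ k j ≠ eps k hk1 Λ :=
          fun he => absurd (hmin j hj he) (by omega)
        have := hXle j hj
        rw [if_neg (by omega), if_neg (by omega)]
        omega
      · have := hXle j hj
        split_ifs <;> omega
    · rw [← hXl']; exact Finset.le_sup' _ hl
  -- X at k+1
  have hXk1' : Xval Λ' k (k + 1) = Xval Λ k (k + 1) - 2 := by
    rw [hX (k + 1), if_pos (by omega), if_pos (by omega)]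
    ring
  -- φ in terms of ε
  have hphiX : ∀ (M : ℕ → ℕ → ℤ), phi k hk1 M = eps k hk1 M - Xval M k (k + 1) := by
    intro M
    rw [phi, eps, ← sup'_sub_const (Finset.nonempty_Icc.mpr hk1) (Xval M k) (Xval M k (k + 1))]
    refine Finset.sup'_congr _ rfl fun j hj => ?_
    exact Yval_eq_Xval M k j (Finset.mem_Icc.mp hj).2
  have hphi' : phi k hk1 Λ' = phi k hk1 Λ + 1 := by
    rw [hphiX, hphiX, heps', hXk1']; ring
  -- x_{k+1} ≤ 0 hence X_{k+1} ≤ ε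
  have hz1 : Λ k (k + 1) = 0 := hΛ.1 k (k + 1) (by omega)
  have hz2 : Λ (k - 1) k = 0 := hΛ.1 (k - 1) k (by omega)
  have hint : Λ (k + 1) (k + 1) ≤ Λ k k := by
    have := (hΛ.2 (k + 1) k hk1 le_rfl (by omega)).2
    simpa using this
  have hxk1 : xval Λ k (k + 1) ≤ 0 := by
    rw [xval]
    simp only [Nat.add_sub_cancel, hz1, hz2]
    omega
  have hXsum : Xval Λ k (k + 1) = Xval Λ k k + xval Λ k (k + 1) := by
    rw [Xval, Xval, (show Finset.Icc 1 (k + 1) = Finset.Ioc 0 (k + 1) from Finset.Icc_add_one_left_eq_Ioc (0:ℕ) (k + 1)), (show Finset.Icc 1 k = Finset.Ioc 0 k from Finset.Icc_add_one_left_eq_Ioc (0:ℕ) k),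
      ← Finset.sum_Ioc_succ_top (Nat.zero_le k)]
  have hXk1le : Xval Λ k (k + 1) ≤ eps k hk1 Λ := by
    have := hXle k (Finset.mem_Icc.mpr ⟨hk1, le_rfl⟩)
    omega
  have hphipos : 0 < phi k hk1 Λ' := by
    rw [hphiX, heps', hXk1']
    omega
  have hYl : Yval Λ' k l = phi k hk1 Λ' := by
    rw [Yval_eq_Xval Λ' k l hlk, hphiX, hXl', heps']
  refine ⟨heps', hphi', hphipos, hYl, ?_, ?_⟩
  · intro j hj hYj
    by_contra hcon
    push_neg at hcon
    have hjk := (Finset.mem_Icc.mp hj).2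
    rw [Yval_eq_Xval Λ' k j hjk, hphiX, heps'] at hYj
    have hXj : Xval Λ' k j = eps k hk1 Λ - 1 := by omega
    rw [hX j, if_pos (by omega), if_pos (by omega)] at hXj
    have := hXle j hj
    omega
  · funext m i
    rw [hΛ']
    by_cases h : m = k ∧ i = l
    · obtain ⟨rfl, rfl⟩ := h
      simp
    · simp [h]
end
end
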